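/- arXiv:quant-ph/0402076 — 3 statements merged into one kernel-verified Lean document; each statement's English description precedes it below -/
import Mathlib

section
/- Let q ≥ 1 and let A be a complex matrix on ℋ^{⊗q} whose symmetric part 𝖯_q(A) is Hermitian. Then the sequence μ_n(A) := λ_max(𝖯_{q+n}(A ⊗ I^{⊗n})) is non-increasing in n, i.e., λ_max(𝖯_{q+n+1}(A ⊗ I^{⊗(n+1)})) ≤ λ_max(𝖯_{q+n}(A ⊗ I^{⊗n})) for every n ≥ 0. -/
open Matrix Filter
open scoped ComplexOrder

/-- The permutation matrix `P_π` on `ℋ^{⊗n}` (`ℋ = ℂ^d`), acting by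
`(P_π x)_{(i₁,…,iₙ)} = x_{(i_{π(1)},…,i_{π(n)})}`. -/
noncomputable def permMatrix (d n : ℕ) (π : Equiv.Perm (Fin n)) :
    Matrix (Fin n → Fin d) (Fin n → Fin d) ℂ :=
  fun i j => if j = i ∘ π then 1 else 0

/-- The symmetrization `𝖯_n(X) = (1/n!) Σ_{π ∈ S_n} P_π† X P_π`. -/
noncomputable def symmetrize (d n : ℕ)
    (X : Matrix (Fin n → Fin d) (Fin n → Fin d) ℂ) :
    Matrix (Fin n → Fin d) (Fin n → Fin d) ℂ :=
  (n.factorial : ℂ)⁻¹ • ∑ π : Equiv.Perm (Fin n),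
    (permMatrix d n π)ᴴ * X * permMatrix d n π

/-- The largest (real) eigenvalue of a matrix: `λ_max`. -/
noncomputable def lamMax {I : Type*} [Fintype I] [DecidableEq I]
    (X : Matrix I I ℂ) : ℝ :=
  sSup {t : ℝ | ∃ v : I → ℂ, v ≠ 0 ∧ X *ᵥ v = (t : ℂ) • v}

/-- The `q`-fold Kronecker power `ρ^{⊗q}`. -/
noncomputable def tensPow (d q : ℕ) (ρ : Matrix (Fin d) (Fin d) ℂ) :
    Matrix (Fin q → Fin d) (Fin q → Fin d) ℂ :=
  fun i j => ∏ a, ρ (i a) (j a)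

/-- The matrix `A ⊗ I^{⊗n}` on `ℋ^{⊗(q+n)}`. -/
noncomputable def tensExt (d q n : ℕ)
    (A : Matrix (Fin q → Fin d) (Fin q → Fin d) ℂ) :
    Matrix (Fin (q + n) → Fin d) (Fin (q + n) → Fin d) ℂ :=
  fun i j =>
    A (fun a => i (Fin.castAdd n a)) (fun a => j (Fin.castAdd n a)) *
      ∏ b : Fin n, (if i (Fin.natAdd q b) = j (Fin.natAdd q b) then (1 : ℂ) else 0)

/-- A density matrix: positive semidefinite with unit trace. -/
def IsDensity (d : ℕ) (ρ : Matrix (Fin d) (Fin d) ℂ) : Prop :=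
  ρ.PosSemidef ∧ ρ.trace = 1

section Perm
variable {d n : ℕ}

lemma comp_perm_eq_iff {α : Type*} (f g : Fin n → α) (π : Equiv.Perm (Fin n)) :
    f = g ∘ ⇑π ↔ g = f ∘ ⇑π⁻¹ := by
  constructor <;> rintro rfl <;> funext a <;> simp

lemma permMatrix_mul (π σ : Equiv.Perm (Fin n)) :
    permMatrix d n π * permMatrix d n σ = permMatrix d n (π * σ) := by
  ext i j
  simp only [Matrix.mul_apply, permMatrix, ite_mul, one_mul, zero_mul]
  rw [Finset.sum_ite_eq' Finset.univ (i ∘ ⇑π) (fun k => if j = k ∘ ⇑σ then (1:ℂ) else 0)]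
  simp only [Finset.mem_univ, if_true]
  have : (i ∘ ⇑π) ∘ ⇑σ = i ∘ ⇑(π * σ) := by funext a; simp [Equiv.Perm.mul_apply]
  rw [this]

lemma permMatrix_one : permMatrix d n 1 = 1 := by
  ext i j
  simp [permMatrix, Matrix.one_apply, eq_comm]

lemma permMatrix_conjTranspose (π : Equiv.Perm (Fin n)) :
    (permMatrix d n π)ᴴ = permMatrix d n π⁻¹ := by
  ext i j
  simp only [conjTranspose_apply, permMatrix]
  rw [if_congr (comp_perm_eq_iff i j π) rfl rfl]
  simp [apply_ite]

lemma permMatrix_conj_apply (π : Equiv.Perm (Fin n))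
    (X : Matrix (Fin n → Fin d) (Fin n → Fin d) ℂ) (i j : Fin n → Fin d) :
    ((permMatrix d n π)ᴴ * X * permMatrix d n π) i j = X (i ∘ ⇑π⁻¹) (j ∘ ⇑π⁻¹) := by
  rw [permMatrix_conjTranspose]
  simp only [Matrix.mul_apply, permMatrix, ite_mul, one_mul, zero_mul, mul_ite, mul_zero, mul_one]
  have h1 : ∀ l, (∑ k, if k = i ∘ ⇑π⁻¹ then X k l else 0) = X (i ∘ ⇑π⁻¹) l := by
    intro l
    rw [Finset.sum_ite_eq' Finset.univ (i ∘ ⇑π⁻¹) (fun k => X k l)]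
    simp
  simp only [h1]
  have h2 : ∀ l : Fin n → Fin d, (j = l ∘ ⇑π) = (l = j ∘ ⇑π⁻¹) := by
    intro l; exact propext (comp_perm_eq_iff j l π)
  simp only [h2]
  rw [Finset.sum_ite_eq' Finset.univ (j ∘ ⇑π⁻¹) (fun l => X (i ∘ ⇑π⁻¹) l)]
  simp

end Perm

section Symmetrize
variable {d n : ℕ}

lemma symmetrize_conj (σ : Equiv.Perm (Fin n)) (X : Matrix (Fin n → Fin d) (Fin n → Fin d) ℂ) :
    symmetrize d n ((permMatrix d n σ)ᴴ * X * permMatrix d n σ) = symmetrize d n X := by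
  unfold symmetrize
  congr 1
  rw [← Equiv.sum_comp (Equiv.mulLeft σ)
    (fun π => (permMatrix d n π)ᴴ * X * permMatrix d n π)]
  refine Finset.sum_congr rfl fun π _ => ?_
  simp only [Equiv.coe_mulLeft]
  rw [← permMatrix_mul, conjTranspose_mul]
  simp only [Matrix.mul_assoc]

lemma symmetrize_smul (c : ℂ) (X : Matrix (Fin n → Fin d) (Fin n → Fin d) ℂ) :
    symmetrize d n (c • X) = c • symmetrize d n X := by
  unfold symmetrize
  rw [smul_comm]
  congr 1
  rw [Finset.smul_sum]
  exact Finset.sum_congr rfl fun π _ => by rw [Matrix.mul_smul, Matrix.smul_mul]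

lemma symmetrize_sum {ι : Type*} (s : Finset ι)
    (f : ι → Matrix (Fin n → Fin d) (Fin n → Fin d) ℂ) :
    symmetrize d n (∑ i ∈ s, f i) = ∑ i ∈ s, symmetrize d n (f i) := by
  unfold symmetrize
  rw [← Finset.smul_sum]
  congr 1
  rw [Finset.sum_comm]
  exact Finset.sum_congr rfl fun π _ => by rw [Finset.mul_sum, Finset.sum_mul]

lemma symmetrize_sub (X Y : Matrix (Fin n → Fin d) (Fin n → Fin d) ℂ) :
    symmetrize d n (X - Y) = symmetrize d n X - symmetrize d n Y := by
  unfold symmetrize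
  rw [← smul_sub]
  congr 1
  rw [← Finset.sum_sub_distrib]
  exact Finset.sum_congr rfl fun π _ => by rw [Matrix.mul_sub, Matrix.sub_mul]

lemma symmetrize_one : symmetrize d n 1 = 1 := by
  unfold symmetrize
  have h : ∀ π : Equiv.Perm (Fin n),
      (permMatrix d n π)ᴴ * 1 * permMatrix d n π = (1 : Matrix (Fin n → Fin d) _ ℂ) := by
    intro π
    rw [Matrix.mul_one, permMatrix_conjTranspose, permMatrix_mul, inv_mul_cancel, permMatrix_one]
  simp only [h, Finset.sum_const, Finset.card_univ, Fintype.card_perm, Fintype.card_fin]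
  rw [← Nat.cast_smul_eq_nsmul ℂ, smul_smul, inv_mul_cancel₀, one_smul]
  exact_mod_cast Nat.factorial_ne_zero n

lemma symmetrize_conjTranspose (X : Matrix (Fin n → Fin d) (Fin n → Fin d) ℂ) :
    symmetrize d n Xᴴ = (symmetrize d n X)ᴴ := by
  unfold symmetrize
  rw [conjTranspose_smul, conjTranspose_sum]
  congr 1
  · simp [star_inv₀]
  refine Finset.sum_congr rfl fun π _ => ?_
  rw [conjTranspose_mul, conjTranspose_mul, conjTranspose_conjTranspose]
  simp only [Matrix.mul_assoc]

lemma posSemidef_sum {ι : Type*} {I : Type*} [Fintype I] (s : Finset ι)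
    (f : ι → Matrix I I ℂ) (h : ∀ i ∈ s, (f i).PosSemidef) :
    (∑ i ∈ s, f i).PosSemidef :=
  Finset.sum_induction f _ (fun _ _ ha hb => ha.add hb) Matrix.PosSemidef.zero h

lemma posSemidef_real_smul {I : Type*} [Fintype I] {M : Matrix I I ℂ} (hM : M.PosSemidef)
    {c : ℝ} (hc : 0 ≤ c) : ((c : ℂ) • M).PosSemidef := by
  refine Matrix.PosSemidef.of_dotProduct_mulVec_nonneg ?_ ?_
  · rw [Matrix.IsHermitian, conjTranspose_smul, hM.1]
    congr 1
    simp [Complex.conj_ofReal]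
  · intro x
    rw [Matrix.smul_mulVec, dotProduct_smul, smul_eq_mul]
    exact mul_nonneg (Complex.zero_le_real.mpr hc) (hM.dotProduct_mulVec_nonneg x)

lemma symmetrize_posSemidef {X : Matrix (Fin n → Fin d) (Fin n → Fin d) ℂ}
    (hX : X.PosSemidef) : (symmetrize d n X).PosSemidef := by
  unfold symmetrize
  have : ((n.factorial : ℂ))⁻¹ = (((n.factorial : ℝ))⁻¹ : ℝ) := by push_cast; ring
  rw [this]
  refine posSemidef_real_smul ?_ (by positivity)
  exact posSemidef_sum _ _ fun π _ => hX.conjTranspose_mul_mul_same (permMatrix d n π)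

end Symmetrize

section TensExt
variable {d q n : ℕ}

lemma prod_ite_funeq {J α : Type*} [Fintype J] [DecidableEq α] (f g : J → α) :
    (∏ b, if f b = g b then (1 : ℂ) else 0) = if f = g then 1 else 0 := by
  by_cases h : f = g
  · subst h; simp
  · rw [if_neg h]
    obtain ⟨b, hb⟩ := Function.ne_iff.mp h
    exact Finset.prod_eq_zero (Finset.mem_univ b) (if_neg hb)

lemma tensExt_add (X Y : Matrix (Fin q → Fin d) (Fin q → Fin d) ℂ) :
    tensExt d q n (X + Y) = tensExt d q n X + tensExt d q n Y := by
  ext i j; simp [tensExt, add_mul]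

lemma tensExt_sub (X Y : Matrix (Fin q → Fin d) (Fin q → Fin d) ℂ) :
    tensExt d q n (X - Y) = tensExt d q n X - tensExt d q n Y := by
  ext i j; simp [tensExt, sub_mul]

lemma tensExt_smul (c : ℂ) (X : Matrix (Fin q → Fin d) (Fin q → Fin d) ℂ) :
    tensExt d q n (c • X) = c • tensExt d q n X := by
  ext i j; simp [tensExt, mul_assoc]

lemma tensExt_sum {ι : Type*} (s : Finset ι)
    (f : ι → Matrix (Fin q → Fin d) (Fin q → Fin d) ℂ) :
    tensExt d q n (∑ i ∈ s, f i) = ∑ i ∈ s, tensExt d q n (f i) := by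
  ext i j
  simp only [tensExt, Finset.sum_apply, Matrix.sum_apply, Finset.sum_mul]

lemma tensExt_one : tensExt d q n (1 : Matrix (Fin q → Fin d) (Fin q → Fin d) ℂ) = 1 := by
  ext i j
  rw [tensExt, prod_ite_funeq, Matrix.one_apply, Matrix.one_apply]
  by_cases h : i = j
  · subst h; simp
  · have : ¬((fun a => i (Fin.castAdd n a)) = (fun a => j (Fin.castAdd n a))
        ∧ (fun b => i (Fin.natAdd q b)) = (fun b => j (Fin.natAdd q b))) := by
      rintro ⟨h1, h2⟩
      exact h (funext fun k => Fin.addCases (fun a => congrFun h1 a) (fun b => congrFun h2 b) k)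
    rw [if_neg h]
    rcases not_and_or.mp this with hh | hh
    · rw [if_neg hh, zero_mul]
    · rw [if_neg hh, mul_zero]

lemma tensExt_conjTranspose (X : Matrix (Fin q → Fin d) (Fin q → Fin d) ℂ) :
    tensExt d q n Xᴴ = (tensExt d q n X)ᴴ := by
  ext i j
  simp only [tensExt, Matrix.conjTranspose_apply, star_mul']
  congr 1
  rw [star_prod Finset.univ
    (fun b => if j (Fin.natAdd q b) = i (Fin.natAdd q b) then (1 : ℂ) else 0)]
  refine Finset.prod_congr rfl fun b _ => ?_
  rcases eq_or_ne (i (Fin.natAdd q b)) (j (Fin.natAdd q b)) with h | h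
  · simp [h]
  · simp [h, h.symm]

/-- The `A ⊗ I` matrix on a product index, un-curried form. -/
noncomputable def kronOne {I J : Type*} [DecidableEq J] (M : Matrix I I ℂ) :
    Matrix (I × J) (I × J) ℂ :=
  fun p r => M p.1 r.1 * (if p.2 = r.2 then 1 else 0)

lemma kronOne_posSemidef {I J : Type*} [Fintype I] [Fintype J] [DecidableEq J]
    {M : Matrix I I ℂ} (hM : M.PosSemidef) : (kronOne (J := J) M).PosSemidef := by
  refine Matrix.PosSemidef.of_dotProduct_mulVec_nonneg ?_ ?_
  · ext p r
    simp only [kronOne, conjTranspose_apply, star_mul']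
    congr 1
    · calc star (M r.1 p.1) = Mᴴ p.1 r.1 := rfl
        _ = M p.1 r.1 := by rw [hM.1]
    · rcases eq_or_ne p.2 r.2 with h | h
      · simp [h]
      · simp [h, Ne.symm h]
  · intro x
    have hmv : (kronOne (J := J) M) *ᵥ x = fun p => (M *ᵥ fun i => x (i, p.2)) p.1 := by
      funext p
      simp only [Matrix.mulVec, dotProduct, kronOne]
      rw [Fintype.sum_prod_type]
      simp only [mul_ite, mul_one, mul_zero, ite_mul, zero_mul]
      refine Finset.sum_congr rfl fun i _ => ?_
      rw [Finset.sum_ite_eq Finset.univ p.2 (fun b => M p.1 i * x (i, b))]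
      simp
    rw [hmv]
    unfold dotProduct
    rw [Fintype.sum_prod_type]
    rw [Finset.sum_comm]
    refine Finset.sum_nonneg fun b _ => ?_
    exact hM.dotProduct_mulVec_nonneg (fun i => x (i, b))

/-- Splitting a function on `Fin (q+n)` into its two blocks. -/
def splitE (d q n : ℕ) : (Fin (q + n) → Fin d) ≃ (Fin q → Fin d) × (Fin n → Fin d) where
  toFun f := (fun a => f (Fin.castAdd n a), fun b => f (Fin.natAdd q b))
  invFun p := fun k => Fin.addCases (fun a => p.1 a) (fun b => p.2 b) k
  left_inv f := by
    funext k
    refine Fin.addCases (fun a => ?_) (fun b => ?_) k <;> simp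
  right_inv p := by
    obtain ⟨p1, p2⟩ := p
    simp only [Prod.mk.injEq]
    constructor <;> funext a <;> simp

lemma tensExt_eq_submatrix (A : Matrix (Fin q → Fin d) (Fin q → Fin d) ℂ) :
    tensExt d q n A = (kronOne A).submatrix (splitE d q n) (splitE d q n) := by
  ext i j
  simp only [tensExt, submatrix_apply, kronOne, splitE, Equiv.coe_fn_mk]
  rw [prod_ite_funeq]

lemma tensExt_posSemidef {A : Matrix (Fin q → Fin d) (Fin q → Fin d) ℂ}
    (hA : A.PosSemidef) : (tensExt d q n A).PosSemidef := by
  rw [tensExt_eq_submatrix]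
  exact (kronOne_posSemidef hA).submatrix _

end TensExt

section Emb
variable {d q n : ℕ}

def embPerm (m k : ℕ) (σ : Equiv.Perm (Fin m)) : Equiv.Perm (Fin (m + k)) :=
  (Equiv.permCongr finSumFinEquiv) (Equiv.sumCongr σ (Equiv.refl (Fin k)))

lemma embPerm_castAdd (m k : ℕ) (σ : Equiv.Perm (Fin m)) (a : Fin m) :
    embPerm m k σ (Fin.castAdd k a) = Fin.castAdd k (σ a) := by
  simp [embPerm, Equiv.permCongr_apply, finSumFinEquiv_symm_apply_castAdd]

lemma embPerm_natAdd (m k : ℕ) (σ : Equiv.Perm (Fin m)) (b : Fin k) :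
    embPerm m k σ (Fin.natAdd m b) = Fin.natAdd m b := by
  simp [embPerm, Equiv.permCongr_apply, finSumFinEquiv_symm_apply_natAdd]

lemma embPerm_inv_castAdd (m k : ℕ) (σ : Equiv.Perm (Fin m)) (a : Fin m) :
    (embPerm m k σ)⁻¹ (Fin.castAdd k a) = Fin.castAdd k (σ⁻¹ a) := by
  apply (embPerm m k σ).injective
  rw [Equiv.Perm.inv_def, Equiv.apply_symm_apply, embPerm_castAdd, Equiv.Perm.inv_def, Equiv.apply_symm_apply]

lemma embPerm_inv_natAdd (m k : ℕ) (σ : Equiv.Perm (Fin m)) (b : Fin k) :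
    (embPerm m k σ)⁻¹ (Fin.natAdd m b) = Fin.natAdd m b := by
  apply (embPerm m k σ).injective
  rw [Equiv.Perm.inv_def, Equiv.apply_symm_apply, embPerm_natAdd]

lemma tensExt_conjPerm (m k : ℕ) (σ : Equiv.Perm (Fin m))
    (X : Matrix (Fin m → Fin d) (Fin m → Fin d) ℂ) :
    tensExt d m k ((permMatrix d m σ)ᴴ * X * permMatrix d m σ)
      = (permMatrix d (m + k) (embPerm m k σ))ᴴ * tensExt d m k X
          * permMatrix d (m + k) (embPerm m k σ) := by
  ext i j
  rw [permMatrix_conj_apply]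
  simp only [tensExt, permMatrix_conj_apply]
  congr 1
  · congr 1
    · funext a; simp [Function.comp, embPerm_inv_castAdd]
    · funext a; simp [Function.comp, embPerm_inv_castAdd]
  · refine Finset.prod_congr rfl fun b _ => ?_
    simp [Function.comp, embPerm_inv_natAdd]

lemma symmetrize_tensExt_symmetrize (m k : ℕ)
    (X : Matrix (Fin m → Fin d) (Fin m → Fin d) ℂ) :
    symmetrize d (m + k) (tensExt d m k (symmetrize d m X))
      = symmetrize d (m + k) (tensExt d m k X) := by
  rw [show symmetrize d m X = (m.factorial : ℂ)⁻¹ • ∑ σ : Equiv.Perm (Fin m),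
      (permMatrix d m σ)ᴴ * X * permMatrix d m σ from rfl,
    tensExt_smul, tensExt_sum, symmetrize_smul, symmetrize_sum]
  have h : ∀ σ ∈ (Finset.univ : Finset (Equiv.Perm (Fin m))),
      symmetrize d (m + k) (tensExt d m k ((permMatrix d m σ)ᴴ * X * permMatrix d m σ))
        = symmetrize d (m + k) (tensExt d m k X) := by
    intro σ _
    rw [tensExt_conjPerm, symmetrize_conj]
  rw [Finset.sum_congr rfl h, Finset.sum_const, Finset.card_univ, Fintype.card_perm,
    Fintype.card_fin, ← Nat.cast_smul_eq_nsmul ℂ, smul_smul, inv_mul_cancel₀, one_smul]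
  exact_mod_cast Nat.factorial_ne_zero m

lemma tensExt_comp (A : Matrix (Fin q → Fin d) (Fin q → Fin d) ℂ) :
    tensExt d (q + n) 1 (tensExt d q n A) = tensExt d q (n + 1) A := by
  ext i j
  simp only [tensExt]
  rw [Fin.prod_univ_one, Fin.prod_univ_castSucc]
  have e1 : ∀ f : Fin (q + n + 1) → Fin d,
      (fun a => f (Fin.castAdd 1 (Fin.castAdd n a)))
        = (fun a : Fin q => f (Fin.castAdd (n + 1) a)) := by
    intro f; funext a; congr 1
  have e3 : Fin.natAdd (q + n) (0 : Fin 1) = Fin.natAdd q (Fin.last n) := Fin.ext (by simp)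
  rw [e1 i, e1 j, e3, ← mul_assoc]
  congr 2

end Emb

section Spec
variable {I : Type*} [Fintype I] [DecidableEq I]

lemma smul_one_sub_eq {M : Matrix I I ℂ} (hM : M.IsHermitian) (c : ℂ) :
    c • (1 : Matrix I I ℂ) - M
      = (hM.eigenvectorUnitary : Matrix I I ℂ)
          * Matrix.diagonal (fun i => c - (hM.eigenvalues i : ℂ))
          * star (hM.eigenvectorUnitary : Matrix I I ℂ) := by
  have hUU : (hM.eigenvectorUnitary : Matrix I I ℂ)
      * star (hM.eigenvectorUnitary : Matrix I I ℂ) = 1 :=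
    (Matrix.mem_unitaryGroup_iff).mp hM.eigenvectorUnitary.2
  have hd : Matrix.diagonal (fun i => c - (hM.eigenvalues i : ℂ))
      = c • 1 - Matrix.diagonal (RCLike.ofReal ∘ hM.eigenvalues) := by
    ext i j
    rcases eq_or_ne i j with h | h
    · subst h
      simp [Matrix.diagonal_apply_eq, Matrix.one_apply, RCLike.ofReal]
    · simp [Matrix.diagonal_apply_ne _ h, Matrix.one_apply_ne h]
  rw [hd, Matrix.mul_sub, Matrix.sub_mul, Matrix.mul_smul, Matrix.mul_one, Matrix.smul_mul,
    hUU]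
  congr 1
  exact hM.spectral_theorem

lemma sub_smul_one_eq {M : Matrix I I ℂ} (hM : M.IsHermitian) (c : ℂ) :
    M - c • (1 : Matrix I I ℂ)
      = (hM.eigenvectorUnitary : Matrix I I ℂ)
          * Matrix.diagonal (fun i => (hM.eigenvalues i : ℂ) - c)
          * star (hM.eigenvectorUnitary : Matrix I I ℂ) := by
  have h := congrArg Neg.neg (smul_one_sub_eq hM c)
  rw [neg_sub] at h
  rw [h, ← Matrix.neg_mul, ← Matrix.mul_neg]
  congr 2
  ext i j
  rcases eq_or_ne i j with hij | hij
  · subst hij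
    simp [Matrix.diagonal_apply_eq, neg_sub]
  · simp [Matrix.diagonal_apply_ne _ hij]

lemma specSet_eq_range {M : Matrix I I ℂ} (hM : M.IsHermitian) :
    {t : ℝ | ∃ v : I → ℂ, v ≠ 0 ∧ M *ᵥ v = (t : ℂ) • v} = Set.range hM.eigenvalues := by
  ext t
  constructor
  · rintro ⟨v, hv, hMv⟩
    have h0 : (M - (t : ℂ) • 1) *ᵥ v = 0 := by
      rw [Matrix.sub_mulVec, Matrix.smul_mulVec, Matrix.one_mulVec, hMv, sub_self]
    have hdet : (M - (t : ℂ) • 1).det = 0 :=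
      Matrix.exists_mulVec_eq_zero_iff.mp ⟨v, hv, h0⟩
    set U := (hM.eigenvectorUnitary : Matrix I I ℂ) with hUdef
    have hUU : U * star U = 1 := (Matrix.mem_unitaryGroup_iff).mp hM.eigenvectorUnitary.2
    have hU1 : U.det * (star U).det = 1 := by rw [← Matrix.det_mul, hUU, Matrix.det_one]
    have hdet2 : (M - (t : ℂ) • 1).det
        = (Matrix.diagonal fun i => (hM.eigenvalues i : ℂ) - t).det := by
      rw [sub_smul_one_eq hM (t : ℂ), Matrix.det_mul, Matrix.det_mul]
      calc U.det * (Matrix.diagonal fun i => (hM.eigenvalues i : ℂ) - t).det * (star U).det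
          = (Matrix.diagonal fun i => (hM.eigenvalues i : ℂ) - t).det
              * (U.det * (star U).det) := by ring
        _ = _ := by rw [hU1, mul_one]
    rw [hdet2, Matrix.det_diagonal] at hdet
    obtain ⟨i, _, hi⟩ := Finset.prod_eq_zero_iff.mp hdet
    refine ⟨i, ?_⟩
    have : (hM.eigenvalues i : ℂ) = (t : ℂ) := sub_eq_zero.mp hi
    exact_mod_cast this
  · rintro ⟨i, rfl⟩
    refine ⟨⇑(hM.eigenvectorBasis i), ?_, ?_⟩
    · intro h
      exact hM.eigenvectorBasis.orthonormal.ne_zero i (by ext x; exact congrFun h x)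
    · rw [hM.mulVec_eigenvectorBasis i]
      funext x
      simp [Complex.real_smul]

lemma lamMax_eq_sSup_range {M : Matrix I I ℂ} (hM : M.IsHermitian) :
    lamMax M = sSup (Set.range hM.eigenvalues) := by
  rw [lamMax, specSet_eq_range hM]

lemma eigenvalues_le_lamMax [Nonempty I] {M : Matrix I I ℂ} (hM : M.IsHermitian) (i : I) :
    hM.eigenvalues i ≤ lamMax M := by
  rw [lamMax_eq_sSup_range hM]
  exact le_csSup (Set.finite_range _).bddAbove ⟨i, rfl⟩

lemma posSemidef_lamMax_smul_one_sub [Nonempty I] {M : Matrix I I ℂ} (hM : M.IsHermitian) :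
    (((lamMax M : ℂ)) • 1 - M).PosSemidef := by
  rw [smul_one_sub_eq hM, Matrix.star_eq_conjTranspose]
  refine Matrix.PosSemidef.mul_mul_conjTranspose_same ?_ _
  refine Matrix.posSemidef_diagonal_iff.mpr fun i => ?_
  rw [show (lamMax M : ℂ) - (hM.eigenvalues i : ℂ) = ((lamMax M - hM.eigenvalues i : ℝ) : ℂ) from
    by push_cast; ring]
  exact Complex.zero_le_real.mpr (sub_nonneg.mpr (eigenvalues_le_lamMax hM i))

lemma lamMax_le_of_posSemidef [Nonempty I] {M : Matrix I I ℂ} (hM : M.IsHermitian) {c : ℝ}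
    (h : (((c : ℂ)) • 1 - M).PosSemidef) : lamMax M ≤ c := by
  rw [lamMax]
  apply csSup_le
  · rw [specSet_eq_range hM]
    exact Set.range_nonempty _
  · rintro t ⟨v, hv, hMv⟩
    have h2 := h.dotProduct_mulVec_nonneg v
    have hmv : (((c : ℂ)) • 1 - M) *ᵥ v = ((c - t : ℝ) : ℂ) • v := by
      rw [Matrix.sub_mulVec, Matrix.smul_mulVec, Matrix.one_mulVec, hMv, ← sub_smul]
      norm_cast
    rw [hmv, dotProduct_smul, smul_eq_mul] at h2
    set s := dotProduct (star v) v with hs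
    have hsnn : (0 : ℂ) ≤ s := dotProduct_star_self_nonneg v
    have hsne : s ≠ 0 := fun h0 => hv (dotProduct_star_self_eq_zero.mp h0)
    have hspos : 0 < s.re := by
      rcases lt_or_eq_of_le hsnn with h' | h'
      · simpa using (Complex.lt_def.mp h').1
      · exact absurd h'.symm hsne
    have him : s.im = 0 := by
      have := (Complex.le_def.mp hsnn).2
      simpa using this.symm
    have h3 : 0 ≤ (c - t) * s.re := by
      have := (Complex.le_def.mp h2).1
      simpa [Complex.mul_re, him] using this
    nlinarith [hspos]

end Spec

section Main
variable {d q : ℕ}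

lemma symmetrize_tensExt_isHermitian
    (A : Matrix (Fin q → Fin d) (Fin q → Fin d) ℂ)
    (hA : (symmetrize d q A).IsHermitian) (n : ℕ) :
    (symmetrize d (q + n) (tensExt d q n A)).IsHermitian := by
  rw [Matrix.IsHermitian, ← symmetrize_conjTranspose, ← tensExt_conjTranspose,
    ← symmetrize_tensExt_symmetrize q n Aᴴ, symmetrize_conjTranspose, hA,
    symmetrize_tensExt_symmetrize q n A]


/-- For `q ≥ 1` and `A` on `ℋ^{⊗q}` with Hermitian symmetric part,
the sequence `μ_n(A) = λ_max(𝖯_{q+n}(A ⊗ I^{⊗n}))` is non-increasing in `n`. -/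
theorem stmt1 (d q : ℕ) (hd : 1 ≤ d) (hq : 1 ≤ q)
    (A : Matrix (Fin q → Fin d) (Fin q → Fin d) ℂ)
    (hA : (symmetrize d q A).IsHermitian) :
    ∀ n : ℕ,
      lamMax (symmetrize d (q + (n + 1)) (tensExt d q (n + 1) A)) ≤
        lamMax (symmetrize d (q + n) (tensExt d q n A)) := by
  intro n
  haveI : Nonempty (Fin d) := Fin.pos_iff_nonempty.mp hd
  have hBh : (symmetrize d (q + n) (tensExt d q n A)).IsHermitian :=
    symmetrize_tensExt_isHermitian A hA n
  have hTh : (symmetrize d (q + (n + 1)) (tensExt d q (n + 1) A)).IsHermitian :=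
    symmetrize_tensExt_isHermitian A hA (n + 1)
  set c : ℝ := lamMax (symmetrize d (q + n) (tensExt d q n A)) with hc
  have hpsd1 : ((c : ℂ) • 1 - symmetrize d (q + n) (tensExt d q n A)).PosSemidef :=
    posSemidef_lamMax_smul_one_sub hBh
  have hT' : symmetrize d (q + n + 1) (tensExt d (q + n) 1 (tensExt d q n A))
      = symmetrize d (q + (n + 1)) (tensExt d q (n + 1) A) := by
    rw [tensExt_comp]
    rfl
  have hkey : symmetrize d (q + n + 1)
        (tensExt d (q + n) 1 ((c : ℂ) • 1 - symmetrize d (q + n) (tensExt d q n A)))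
      = (c : ℂ) • 1 - symmetrize d (q + n + 1) (tensExt d (q + n) 1 (tensExt d q n A)) := by
    rw [tensExt_sub, tensExt_smul, tensExt_one, symmetrize_sub, symmetrize_smul,
      symmetrize_one, symmetrize_tensExt_symmetrize (q + n) 1 (tensExt d q n A)]
  have hpsd2 := symmetrize_posSemidef (tensExt_posSemidef (n := 1) hpsd1)
  rw [hkey, hT'] at hpsd2
  exact lamMax_le_of_posSemidef hTh hpsd2
end Main
end

section
/- Let q ≥ 1, n ≥ 0, and let A be any complex matrix on ℋ^{⊗q}. Let P_m be the d^m × S(d,m) isometry with entries (P_m)_{(i),[k]} = δ_{#(i),[k]} (C^m_{[k]})^{−1/2}, indexed by tuples (i) ∈ {1,…,d}^m and types [k] ∈ ℕ^d with Σ[k] = m, and set Q_n(A) := P_{q+n}† (A ⊗ I^{⊗n}) P_{q+n}. Then for all types [k],[l] with Σ[k] = Σ[l] = q+n: (C^{q+n}_{[k]} C^{q+n}_{[l]})^{1/2} · Q_n(A)_{[k],[l]} = Σ over [u],[v] ∈ ℕ^d with Σ[u] = Σ[v] = q of C^n_{[k]−[u]} · δ_{[k]−[u],[l]−[v]} ·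 (C^q_{[u]} C^q_{[v]})^{1/2} · (P_q† A P_q)_{[u],[v]}. -/
open Matrix Filter
open scoped ComplexOrder

/-- The type `#(i) ∈ ℕ^d` of a tuple `(i) ∈ {1,…,d}^m`. -/
def typeCount {d m : ℕ} (i : Fin m → Fin d) : Fin d → ℕ :=
  fun j => (Finset.univ.filter (fun a => i a = j)).card

/-- The multinomial coefficient `C^n_{[k]}` for `[k] ∈ ℤ^d`, `0` when some `k_j < 0`. -/
noncomputable def multinomZ (d : ℕ) (k : Fin d → ℤ) : ℕ :=
  if ∀ j, 0 ≤ k j then Nat.multinomial Finset.univ (fun j => (k j).toNat) else 0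

/-- The set of types `[k] ∈ ℕ^d` with `Σ[k] = m`; it has `S(d,m)` elements. -/
abbrev TypeIdx (d m : ℕ) := {k : Fin d → ℕ // ∑ j, k j = m}

noncomputable instance instFintypeTypeIdx (d m : ℕ) : Fintype (TypeIdx d m) :=
  Fintype.ofInjective
    (fun k => (fun j => (⟨k.1 j, Nat.lt_succ_of_le
        (le_trans (Finset.single_le_sum (fun i _ => Nat.zero_le (k.1 i)) (Finset.mem_univ j))
          (le_of_eq k.2))⟩ : Fin (m + 1))))
    (fun a b h => Subtype.ext (funext fun j => congrArg Fin.val (congrFun h j)))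

/-- The `d^m × S(d,m)` isometry `P_m`, `(P_m)_{(i),[k]} = δ_{#(i),[k]} (C^m_{[k]})^{−1/2}`,
whose columns span the totally symmetric subspace. -/
noncomputable def isoP (d m : ℕ) : Matrix (Fin m → Fin d) (TypeIdx d m) ℂ :=
  fun i k => if typeCount i = k.1
    then ((Real.sqrt (Nat.multinomial Finset.univ k.1) : ℝ) : ℂ)⁻¹ else 0

/-- `Q_n(A) = P_{q+n}† (A ⊗ I^{⊗n}) P_{q+n}`. -/
noncomputable def Qmat (d q n : ℕ) (A : Matrix (Fin q → Fin d) (Fin q → Fin d) ℂ) :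
    Matrix (TypeIdx d (q + n)) (TypeIdx d (q + n)) ℂ :=
  (isoP d (q + n))ᴴ * tensExt d q n A * isoP d (q + n)

lemma sum_typeCount {d m : ℕ} (i : Fin m → Fin d) : ∑ j, typeCount i j = m := by
  classical
  have := Finset.card_eq_sum_card_fiberwise (f := i) (s := Finset.univ) (t := Finset.univ)
    (fun a _ => Finset.mem_univ _)
  simpa [typeCount, Finset.card_univ] using this.symm

lemma sqrtMult_ne_zero {d : ℕ} (w : Fin d → ℕ) :
    ((Real.sqrt (Nat.multinomial Finset.univ w) : ℝ) : ℂ) ≠ 0 := by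
  rw [Complex.ofReal_ne_zero]
  exact ne_of_gt (Real.sqrt_pos.mpr (by exact_mod_cast (Nat.multinomial_pos (s := Finset.univ) (f := w))))

lemma typeCount_cons {d n : ℕ} (j : Fin d) (t : Fin n → Fin d) :
    typeCount (Fin.cons j t) = fun i => (if j = i then 1 else 0) + typeCount t i := by
  funext i
  simp only [typeCount, Finset.card_filter]
  rw [Fin.sum_univ_succ]
  simp [Fin.cons_zero, Fin.cons_succ]

lemma typeCount_append {d q n : ℕ} (a : Fin q → Fin d) (s : Fin n → Fin d) :
    typeCount (Fin.append a s) = fun i => typeCount a i + typeCount s i := by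
  funext i
  simp only [typeCount, Finset.card_filter]
  rw [Fin.sum_univ_add]
  simp [Fin.append_left, Fin.append_right]


lemma multinomial_succ' {d n : ℕ} (w : Fin d → ℕ) (hw : ∑ j, w j = n + 1) :
    Nat.multinomial Finset.univ w =
      ∑ j, if 1 ≤ w j then Nat.multinomial Finset.univ (Function.update w j (w j - 1)) else 0 := by
  have hP : 0 < ∏ j, (w j).factorial := Finset.prod_pos (fun _ _ => Nat.factorial_pos _)
  apply Nat.eq_of_mul_eq_mul_left hP
  rw [Nat.multinomial_spec, hw, Finset.mul_sum]
  have key : ∀ j, ((∏ i, (w i).factorial) *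
      if 1 ≤ w j then Nat.multinomial Finset.univ (Function.update w j (w j - 1)) else 0)
      = w j * n.factorial := by
    intro j
    by_cases h : 1 ≤ w j
    · rw [if_pos h]
      obtain ⟨m, hm⟩ : ∃ m, w j = m + 1 := ⟨w j - 1, by omega⟩
      have hupdfac : (fun i => ((Function.update w j (w j - 1)) i).factorial)
          = Function.update (fun i => (w i).factorial) j ((w j - 1).factorial) := by
        funext i
        by_cases hi : i = j <;> simp [hi, Function.update]
      have hprod : (∏ i, (w i).factorial)
          = w j * ∏ i, ((Function.update w j (w j - 1)) i).factorial := by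
        rw [hupdfac, Finset.prod_update_of_mem (Finset.mem_univ j),
          Finset.sdiff_singleton_eq_erase,
          ← Finset.mul_prod_erase Finset.univ (fun i => (w i).factorial) (Finset.mem_univ j),
          ← mul_assoc]
        congr 1
        rw [hm]
        simp [Nat.factorial_succ]
      have hsum : ∑ i, Function.update w j (w j - 1) i = n := by
        rw [Finset.sum_update_of_mem (Finset.mem_univ j), Finset.sdiff_singleton_eq_erase]
        have := Finset.add_sum_erase Finset.univ w (Finset.mem_univ j)
        omega
      rw [hprod, mul_assoc, Nat.multinomial_spec, hsum]
    · rw [if_neg h, mul_zero]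
      have : w j = 0 := by omega
      rw [this, zero_mul]
  rw [Finset.sum_congr rfl (fun j _ => key j), ← Finset.sum_mul, hw, Nat.factorial_succ]

lemma card_typeCount {d : ℕ} : ∀ {n : ℕ} (w : Fin d → ℕ), ∑ j, w j = n →
    (Finset.univ.filter (fun t : Fin n → Fin d => typeCount t = w)).card
      = Nat.multinomial Finset.univ w := by
  intro n
  induction n with
  | zero =>
    intro w hw
    have hw0 : ∀ j, w j = 0 := fun j =>
      Finset.sum_eq_zero_iff.mp hw j (Finset.mem_univ j)
    have hall : ∀ t : Fin 0 → Fin d, typeCount t = w := by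
      intro t; funext j
      simp [typeCount, hw0 j, Finset.filter_eq_empty_iff]
    rw [Finset.filter_true_of_mem (fun t _ => hall t), Finset.card_univ]
    have hspec := Nat.multinomial_spec (Finset.univ : Finset (Fin d)) w
    simp [hw0] at hspec
    simp [Fintype.card_fun, hspec]
  | succ n ih =>
    intro w hw
    rw [Finset.card_filter]
    rw [← Equiv.sum_comp (Fin.consEquiv (fun _ => Fin d))
      (fun t => if typeCount t = w then 1 else 0)]
    rw [Fintype.sum_prod_type]
    have hterm : ∀ (j : Fin d) (t : Fin n → Fin d),
        (if typeCount (Fin.consEquiv (fun _ => Fin d) (j, t)) = w then 1 else 0) =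
        (if 1 ≤ w j then
          (if typeCount t = Function.update w j (w j - 1) then 1 else 0) else 0) := by
      intro j t
      have hc : (Fin.consEquiv (fun _ => Fin d) (j, t)) = Fin.cons j t := rfl
      rw [hc]
      by_cases hcond : typeCount (Fin.cons j t) = w
      · have h1 : 1 ≤ w j := by
          have := congrFun hcond j
          rw [typeCount_cons] at this
          simp at this
          omega
        have h2 : typeCount t = Function.update w j (w j - 1) := by
          funext i
          have := congrFun hcond i
          rw [typeCount_cons] at this
          simp only at this
          by_cases hi : i = j
          · subst hi; simp only [Function.update_self]; simp at this; omega
          · rw [Function.update_of_ne hi]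
            rw [if_neg (fun hji => hi hji.symm)] at this
            omega
        rw [if_pos hcond, if_pos h1, if_pos h2]
      · rw [if_neg hcond]
        by_cases h1 : 1 ≤ w j
        · rw [if_pos h1, if_neg]
          intro h2
          apply hcond
          funext i
          rw [typeCount_cons]
          show (if j = i then 1 else 0) + typeCount t i = w i
          have := congrFun h2 i
          by_cases hi : i = j
          · subst hi; simp only [Function.update_self] at this; simp [this]; omega
          · rw [Function.update_of_ne hi] at this
            rw [if_neg (fun hji => hi hji.symm)]
            omega
        · rw [if_neg h1]
    rw [Finset.sum_congr rfl (fun j _ => Finset.sum_congr rfl (fun t _ => hterm j t))]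
    have hinner : ∀ j : Fin d,
        (∑ t : Fin n → Fin d, if 1 ≤ w j then
          (if typeCount t = Function.update w j (w j - 1) then 1 else 0) else 0) =
        (if 1 ≤ w j then Nat.multinomial Finset.univ (Function.update w j (w j - 1)) else 0) := by
      intro j
      by_cases h1 : 1 ≤ w j
      · simp only [if_pos h1]
        rw [← Finset.card_filter]
        apply ih
        rw [Finset.sum_update_of_mem (Finset.mem_univ j), Finset.sdiff_singleton_eq_erase]
        have := Finset.add_sum_erase Finset.univ w (Finset.mem_univ j)
        omega
      · simp [h1]
    rw [Finset.sum_congr rfl (fun j _ => hinner j)]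
    exact (multinomial_succ' w hw).symm


lemma PAP_entry {d m : ℕ} (A : Matrix (Fin m → Fin d) (Fin m → Fin d) ℂ) (k l : TypeIdx d m) :
    ((Real.sqrt (Nat.multinomial Finset.univ k.1) *
        Real.sqrt (Nat.multinomial Finset.univ l.1) : ℝ) : ℂ) *
      ((isoP d m)ᴴ * A * isoP d m) k l =
    ∑ i : Fin m → Fin d, ∑ j : Fin m → Fin d,
      (if typeCount i = k.1 then 1 else 0) * (if typeCount j = l.1 then 1 else 0) * A i j := by
  have expand : ((isoP d m)ᴴ * A * isoP d m) k l
      = ∑ j, ∑ i, star (isoP d m i k) * A i j * isoP d m j l := by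
    rw [Matrix.mul_apply]
    refine Finset.sum_congr rfl fun j _ => ?_
    rw [Matrix.mul_apply, Finset.sum_mul]
    refine Finset.sum_congr rfl fun i _ => ?_
    rw [Matrix.conjTranspose_apply]
  rw [expand]
  simp only [Finset.mul_sum]
  rw [Finset.sum_comm]
  refine Finset.sum_congr rfl fun i _ => Finset.sum_congr rfl fun j _ => ?_
  simp only [isoP]
  by_cases h1 : typeCount i = k.1 <;> by_cases h2 : typeCount j = l.1 <;>
    simp only [h1, h2, if_pos, if_neg, if_true, if_false, star_zero, mul_zero, zero_mul,
      ite_true, ite_false]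
  · rw [star_inv₀, Complex.star_def, Complex.conj_ofReal]
    have hk := sqrtMult_ne_zero k.1
    have hl := sqrtMult_ne_zero l.1
    push_cast
    field_simp

lemma inner_count {d q n : ℕ} (k l : TypeIdx d (q + n)) (a b : Fin q → Fin d) :
    (∑ s : Fin n → Fin d,
      ((if (fun i => typeCount a i + typeCount s i) = k.1 then 1 else 0) *
       (if (fun i => typeCount b i + typeCount s i) = l.1 then 1 else 0) : ℂ))
    = (multinomZ d (fun j => (k.1 j : ℤ) - (typeCount a j : ℤ)) : ℂ) *
      (if (fun j => (k.1 j : ℤ) - (typeCount a j : ℤ)) =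
          (fun j => (l.1 j : ℤ) - (typeCount b j : ℤ)) then 1 else 0) := by
  classical
  by_cases hkl : (fun j => (k.1 j : ℤ) - (typeCount a j : ℤ))
      = (fun j => (l.1 j : ℤ) - (typeCount b j : ℤ))
  · by_cases hge : ∀ j, typeCount a j ≤ k.1 j
    · set w : Fin d → ℕ := fun j => k.1 j - typeCount a j with hw
      have hcond : ∀ s : Fin n → Fin d,
          (((fun i => typeCount a i + typeCount s i) = k.1) ∧
           ((fun i => typeCount b i + typeCount s i) = l.1)) ↔ typeCount s = w := by
        intro s
        constructor
        · rintro ⟨h1, _⟩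
          funext j
          have := congrFun h1 j
          simp only [hw] at *
          omega
        · intro hs
          constructor
          · funext j
            have := congrFun hs j
            have hg := hge j
            simp only [hw] at this
            omega
          · funext j
            have := congrFun hs j
            have hz := congrFun hkl j
            have hg := hge j
            simp only [hw] at this hz
            omega
      have hterm : ∀ s : Fin n → Fin d,
          ((if (fun i => typeCount a i + typeCount s i) = k.1 then 1 else 0) *
           (if (fun i => typeCount b i + typeCount s i) = l.1 then 1 else 0) : ℂ)
          = (if typeCount s = w then 1 else 0) := by
        intro s
        by_cases hs : typeCount s = w
        · obtain ⟨h1, h2⟩ := (hcond s).mpr hs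
          rw [if_pos h1, if_pos h2, if_pos hs, one_mul]
        · rw [if_neg hs]
          by_cases h1 : (fun i => typeCount a i + typeCount s i) = k.1
          · rw [if_pos h1]
            rw [if_neg, one_mul]
            intro h2
            exact hs ((hcond s).mp ⟨h1, h2⟩)
          · rw [if_neg h1, zero_mul]
      rw [Finset.sum_congr rfl (fun s _ => hterm s)]
      rw [Finset.sum_boole]
      have hsumw : ∑ j, w j = n := by
        have hka := sum_typeCount a
        have hkk := k.2
        have : ∑ j, w j + ∑ j, typeCount a j = ∑ j, k.1 j := by
          rw [← Finset.sum_add_distrib]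
          refine Finset.sum_congr rfl fun j _ => ?_
          have := hge j
          simp only [hw]
          omega
        omega
      rw [card_typeCount w hsumw, if_pos hkl, mul_one]
      congr 1
      rw [multinomZ, if_pos]
      · congr 1
        funext j
        have := hge j
        simp only [hw]
        omega
      · intro j
        have := hge j
        omega
    · push_neg at hge
      obtain ⟨j0, hj0⟩ := hge
      have hz : multinomZ d (fun j => (k.1 j : ℤ) - (typeCount a j : ℤ)) = 0 := by
        rw [multinomZ, if_neg]
        push_neg
        exact ⟨j0, by omega⟩
      rw [hz]
      simp only [Nat.cast_zero, zero_mul]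
      refine Finset.sum_eq_zero fun s _ => ?_
      rw [if_neg, zero_mul]
      intro h1
      have := congrFun h1 j0
      omega
  · rw [if_neg hkl, mul_zero]
    refine Finset.sum_eq_zero fun s _ => ?_
    by_cases h1 : (fun i => typeCount a i + typeCount s i) = k.1
    · rw [if_pos h1, if_neg, mul_zero]
      intro h2
      apply hkl
      funext j
      have e1 := congrFun h1 j
      have e2 := congrFun h2 j
      omega
    · rw [if_neg h1, zero_mul]

lemma collapse_sum {d q : ℕ} (a : Fin q → Fin d) (g : TypeIdx d q → ℂ) :
    (∑ u : TypeIdx d q, (if typeCount a = u.1 then 1 else 0) * g u)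
      = g ⟨typeCount a, sum_typeCount a⟩ := by
  rw [Fintype.sum_eq_single (⟨typeCount a, sum_typeCount a⟩ : TypeIdx d q)]
  · rw [if_pos rfl, one_mul]
  · intro u hu
    rw [if_neg, zero_mul]
    intro h
    exact hu (Subtype.ext h.symm)

lemma sum4_swap {α β γ δ' : Type*} [Fintype α] [Fintype β] [Fintype γ] [Fintype δ']
    (f : α → β → γ → δ' → ℂ) :
    ∑ u : α, ∑ v : β, ∑ a : γ, ∑ b : δ', f u v a b
      = ∑ a : γ, ∑ b : δ', ∑ u : α, ∑ v : β, f u v a b := by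
  rw [show (∑ u : α, ∑ v : β, ∑ a : γ, ∑ b : δ', f u v a b)
      = ∑ u : α, ∑ a : γ, ∑ b : δ', ∑ v : β, f u v a b from
    Finset.sum_congr rfl fun u _ => by
      rw [Finset.sum_comm]
      exact Finset.sum_congr rfl fun a _ => Finset.sum_comm]
  rw [Finset.sum_comm]
  exact Finset.sum_congr rfl fun a _ => Finset.sum_comm

lemma tensExt_append {d q n : ℕ} (A : Matrix (Fin q → Fin d) (Fin q → Fin d) ℂ)
    (a b : Fin q → Fin d) (s t : Fin n → Fin d) :
    tensExt d q n A (Fin.append a s) (Fin.append b t) = A a b * (if s = t then 1 else 0) := by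
  simp only [tensExt, Fin.append_left, Fin.append_right]
  congr 1
  rw [Fintype.prod_boole]
  simp [funext_iff]

/-- For any complex matrix `A` on `ℋ^{⊗q}` and all types `[k],[l]` with
`Σ[k] = Σ[l] = q+n`:
`√(C^{q+n}_{[k]} C^{q+n}_{[l]}) · Q_n(A)_{[k],[l]}
  = Σ_{[u],[v], Σ[u]=Σ[v]=q} C^n_{[k]−[u]} δ_{[k]−[u],[l]−[v]} √(C^q_{[u]} C^q_{[v]})
      (P_q† A P_q)_{[u],[v]}`. -/
theorem stmt12 (d q n : ℕ) (hd : 1 ≤ d) (hq : 1 ≤ q)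
    (A : Matrix (Fin q → Fin d) (Fin q → Fin d) ℂ)
    (k l : TypeIdx d (q + n)) :
    ((Real.sqrt (Nat.multinomial Finset.univ k.1) *
        Real.sqrt (Nat.multinomial Finset.univ l.1) : ℝ) : ℂ) * Qmat d q n A k l =
      ∑ u : TypeIdx d q, ∑ v : TypeIdx d q,
        (multinomZ d (fun j => (k.1 j : ℤ) - (u.1 j : ℤ)) : ℂ) *
          (if (fun j => (k.1 j : ℤ) - (u.1 j : ℤ)) =
              (fun j => (l.1 j : ℤ) - (v.1 j : ℤ)) then 1 else 0) *
          ((Real.sqrt (Nat.multinomial Finset.univ u.1) *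
              Real.sqrt (Nat.multinomial Finset.univ v.1) : ℝ) : ℂ) *
          ((isoP d q)ᴴ * A * isoP d q) u v := by
  classical
  have hL : ((Real.sqrt (Nat.multinomial Finset.univ k.1) *
        Real.sqrt (Nat.multinomial Finset.univ l.1) : ℝ) : ℂ) * Qmat d q n A k l
      = ∑ a : Fin q → Fin d, ∑ b : Fin q → Fin d,
          (multinomZ d (fun j => (k.1 j : ℤ) - (typeCount a j : ℤ)) : ℂ) *
          (if (fun j => (k.1 j : ℤ) - (typeCount a j : ℤ)) =
              (fun j => (l.1 j : ℤ) - (typeCount b j : ℤ)) then 1 else 0) * A a b := by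
    calc ((Real.sqrt (Nat.multinomial Finset.univ k.1) *
          Real.sqrt (Nat.multinomial Finset.univ l.1) : ℝ) : ℂ) * Qmat d q n A k l
        = ∑ i : Fin (q + n) → Fin d, ∑ j : Fin (q + n) → Fin d,
            (if typeCount i = k.1 then 1 else 0) * (if typeCount j = l.1 then 1 else 0) *
              tensExt d q n A i j := PAP_entry (tensExt d q n A) k l
      _ = ∑ p : (Fin q → Fin d) × (Fin n → Fin d), ∑ p' : (Fin q → Fin d) × (Fin n → Fin d),
            (if typeCount (Fin.append p.1 p.2) = k.1 then 1 else 0) *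
            (if typeCount (Fin.append p'.1 p'.2) = l.1 then 1 else 0) *
              tensExt d q n A (Fin.append p.1 p.2) (Fin.append p'.1 p'.2) :=
          (Fintype.sum_equiv (Fin.appendEquiv q n) _
            (fun i => ∑ j : Fin (q + n) → Fin d, (if typeCount i = k.1 then 1 else 0) *
              (if typeCount j = l.1 then 1 else 0) * tensExt d q n A i j)
            (fun p => (Fintype.sum_equiv (Fin.appendEquiv q n) _
              (fun j => (if typeCount (Fin.append p.1 p.2) = k.1 then 1 else 0) *
                (if typeCount j = l.1 then 1 else 0) * tensExt d q n A (Fin.append p.1 p.2) j)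
              (fun p' => rfl)))).symm
      _ = ∑ a : Fin q → Fin d, ∑ s : Fin n → Fin d, ∑ b : Fin q → Fin d, ∑ t : Fin n → Fin d,
            (if typeCount (Fin.append a s) = k.1 then 1 else 0) *
            (if typeCount (Fin.append b t) = l.1 then 1 else 0) *
              tensExt d q n A (Fin.append a s) (Fin.append b t) := by
          rw [Fintype.sum_prod_type]
          refine Finset.sum_congr rfl fun a _ => Finset.sum_congr rfl fun s _ => ?_
          rw [Fintype.sum_prod_type]
      _ = ∑ a : Fin q → Fin d, ∑ s : Fin n → Fin d, ∑ b : Fin q → Fin d, ∑ t : Fin n → Fin d,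
            (if (fun i => typeCount a i + typeCount s i) = k.1 then 1 else 0) *
            (if (fun i => typeCount b i + typeCount t i) = l.1 then 1 else 0) *
              (A a b * (if s = t then 1 else 0)) := by
          refine Finset.sum_congr rfl fun a _ => Finset.sum_congr rfl fun s _ =>
            Finset.sum_congr rfl fun b _ => Finset.sum_congr rfl fun t _ => ?_
          rw [typeCount_append, typeCount_append, tensExt_append]
      _ = ∑ a : Fin q → Fin d, ∑ s : Fin n → Fin d, ∑ b : Fin q → Fin d,
            (if (fun i => typeCount a i + typeCount s i) = k.1 then 1 else 0) *
            (if (fun i => typeCount b i + typeCount s i) = l.1 then 1 else 0) * A a b := by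
          refine Finset.sum_congr rfl fun a _ => Finset.sum_congr rfl fun s _ =>
            Finset.sum_congr rfl fun b _ => ?_
          rw [Fintype.sum_eq_single s]
          · rw [if_pos rfl, mul_one]
          · intro t ht
            have hst : ¬(s = t) := fun h => ht h.symm
            rw [if_neg hst, mul_zero, mul_zero]
      _ = ∑ a : Fin q → Fin d, ∑ b : Fin q → Fin d, ∑ s : Fin n → Fin d,
            (if (fun i => typeCount a i + typeCount s i) = k.1 then 1 else 0) *
            (if (fun i => typeCount b i + typeCount s i) = l.1 then 1 else 0) * A a b :=
          Finset.sum_congr rfl fun a _ => Finset.sum_comm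
      _ = ∑ a : Fin q → Fin d, ∑ b : Fin q → Fin d,
          (multinomZ d (fun j => (k.1 j : ℤ) - (typeCount a j : ℤ)) : ℂ) *
          (if (fun j => (k.1 j : ℤ) - (typeCount a j : ℤ)) =
              (fun j => (l.1 j : ℤ) - (typeCount b j : ℤ)) then 1 else 0) * A a b := by
          refine Finset.sum_congr rfl fun a _ => Finset.sum_congr rfl fun b _ => ?_
          rw [show (∑ s : Fin n → Fin d,
            (if (fun i => typeCount a i + typeCount s i) = k.1 then 1 else 0) *
            (if (fun i => typeCount b i + typeCount s i) = l.1 then 1 else 0) * A a b : ℂ)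
            = (∑ s : Fin n → Fin d,
            (if (fun i => typeCount a i + typeCount s i) = k.1 then 1 else 0) *
            (if (fun i => typeCount b i + typeCount s i) = l.1 then 1 else 0)) * A a b from
            (Finset.sum_mul _ _ _).symm]
          rw [inner_count k l a b]
  rw [hL]
  symm
  calc (∑ u : TypeIdx d q, ∑ v : TypeIdx d q,
        (multinomZ d (fun j => (k.1 j : ℤ) - (u.1 j : ℤ)) : ℂ) *
          (if (fun j => (k.1 j : ℤ) - (u.1 j : ℤ)) =
              (fun j => (l.1 j : ℤ) - (v.1 j : ℤ)) then 1 else 0) *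
          ((Real.sqrt (Nat.multinomial Finset.univ u.1) *
              Real.sqrt (Nat.multinomial Finset.univ v.1) : ℝ) : ℂ) *
          ((isoP d q)ᴴ * A * isoP d q) u v)
      = ∑ u : TypeIdx d q, ∑ v : TypeIdx d q,
        (multinomZ d (fun j => (k.1 j : ℤ) - (u.1 j : ℤ)) : ℂ) *
          (if (fun j => (k.1 j : ℤ) - (u.1 j : ℤ)) =
              (fun j => (l.1 j : ℤ) - (v.1 j : ℤ)) then 1 else 0) *
          (∑ a : Fin q → Fin d, ∑ b : Fin q → Fin d,
            (if typeCount a = u.1 then 1 else 0) * (if typeCount b = v.1 then 1 else 0) *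
              A a b) := by
        refine Finset.sum_congr rfl fun u _ => Finset.sum_congr rfl fun v _ => ?_
        rw [mul_assoc, PAP_entry A u v]
    _ = ∑ u : TypeIdx d q, ∑ v : TypeIdx d q, ∑ a : Fin q → Fin d, ∑ b : Fin q → Fin d,
          (if typeCount a = u.1 then 1 else 0) * ((if typeCount b = v.1 then 1 else 0) *
            ((multinomZ d (fun j => (k.1 j : ℤ) - (u.1 j : ℤ)) : ℂ) *
             (if (fun j => (k.1 j : ℤ) - (u.1 j : ℤ)) =
                (fun j => (l.1 j : ℤ) - (v.1 j : ℤ)) then 1 else 0) * A a b)) := by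
        refine Finset.sum_congr rfl fun u _ => Finset.sum_congr rfl fun v _ => ?_
        rw [Finset.mul_sum]
        refine Finset.sum_congr rfl fun a _ => ?_
        rw [Finset.mul_sum]
        refine Finset.sum_congr rfl fun b _ => ?_
        ring
    _ = ∑ a : Fin q → Fin d, ∑ b : Fin q → Fin d, ∑ u : TypeIdx d q, ∑ v : TypeIdx d q,
          (if typeCount a = u.1 then 1 else 0) * ((if typeCount b = v.1 then 1 else 0) *
            ((multinomZ d (fun j => (k.1 j : ℤ) - (u.1 j : ℤ)) : ℂ) *
             (if (fun j => (k.1 j : ℤ) - (u.1 j : ℤ)) =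
                (fun j => (l.1 j : ℤ) - (v.1 j : ℤ)) then 1 else 0) * A a b)) :=
        sum4_swap _
    _ = ∑ a : Fin q → Fin d, ∑ b : Fin q → Fin d,
          (multinomZ d (fun j => (k.1 j : ℤ) - (typeCount a j : ℤ)) : ℂ) *
          (if (fun j => (k.1 j : ℤ) - (typeCount a j : ℤ)) =
              (fun j => (l.1 j : ℤ) - (typeCount b j : ℤ)) then 1 else 0) * A a b := by
        refine Finset.sum_congr rfl fun a _ => Finset.sum_congr rfl fun b _ => ?_
        rw [show (∑ u : TypeIdx d q, ∑ v : TypeIdx d q,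
            (if typeCount a = u.1 then 1 else 0) * ((if typeCount b = v.1 then 1 else 0) *
              ((multinomZ d (fun j => (k.1 j : ℤ) - (u.1 j : ℤ)) : ℂ) *
               (if (fun j => (k.1 j : ℤ) - (u.1 j : ℤ)) =
                  (fun j => (l.1 j : ℤ) - (v.1 j : ℤ)) then 1 else 0) * A a b)))
            = ∑ u : TypeIdx d q, (if typeCount a = u.1 then 1 else 0) *
                (∑ v : TypeIdx d q, (if typeCount b = v.1 then 1 else 0) *
                  ((multinomZ d (fun j => (k.1 j : ℤ) - (u.1 j : ℤ)) : ℂ) *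
                   (if (fun j => (k.1 j : ℤ) - (u.1 j : ℤ)) =
                      (fun j => (l.1 j : ℤ) - (v.1 j : ℤ)) then 1 else 0) * A a b)) from
          Finset.sum_congr rfl fun u _ => (Finset.mul_sum _ _ _).symm]
        rw [collapse_sum a, collapse_sum b]
end

section
/- Let q ≥ 1, n ≥ 0, and let A be a symmetric matrix on ℋ^{⊗q} (P_τ† A P_τ = A for all τ ∈ S_q). If π, σ ∈ S_{q+n} satisfy π^{-1}({1,…,q}) = σ^{-1}({1,…,q}) as subsets of {1,…,q+n}, then P_π† (A ⊗ I^{⊗n}) P_π = P_σ† (A ⊗ I^{⊗n}) P_σ. Consequently, the symmetrization 𝖯_{q+n}(A ⊗ I^{⊗n}) equals the average of only binom(q+n, q) distinct conjugates, one for each q-element subset of {1,…,q+n}. -/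
open Matrix Filter
open scoped ComplexOrder

section Aux
variable {d q n : ℕ}

private lemma comp_eq_iff {m : ℕ} (π : Equiv.Perm (Fin m)) (u k : Fin m → Fin d) :
    (u = k ∘ ⇑π) ↔ k = fun a => u (π⁻¹ a) := by
  constructor
  · rintro rfl; funext a; simp [Function.comp]
  · rintro rfl; funext a; simp [Function.comp]

private lemma conj_apply {m : ℕ} (π : Equiv.Perm (Fin m))
    (X : Matrix (Fin m → Fin d) (Fin m → Fin d) ℂ) (i j : Fin m → Fin d) :
    ((permMatrix d m π)ᴴ * X * permMatrix d m π) i j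
      = X (fun a => i (π⁻¹ a)) (fun a => j (π⁻¹ a)) := by
  simp only [Matrix.mul_apply, Matrix.conjTranspose_apply, permMatrix, comp_eq_iff,
    apply_ite (star : ℂ → ℂ), star_one, star_zero, ite_mul, one_mul, zero_mul,
    mul_ite, mul_one, mul_zero, Finset.sum_ite_eq, Finset.sum_ite_eq', Finset.mem_univ, if_true]

private lemma permConj_mul {m : ℕ} (ρ σ : Equiv.Perm (Fin m))
    (X : Matrix (Fin m → Fin d) (Fin m → Fin d) ℂ) :
    (permMatrix d m σ)ᴴ * ((permMatrix d m ρ)ᴴ * X * permMatrix d m ρ) * permMatrix d m σ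
      = (permMatrix d m (ρ * σ))ᴴ * X * permMatrix d m (ρ * σ) := by
  ext i j
  rw [conj_apply, conj_apply, conj_apply]
  simp [_root_.mul_inv_rev]

private lemma natAdd_not_mem_range (b : Fin n) :
    Fin.natAdd q b ∉ Set.range (Fin.castAdd n : Fin q → Fin (q + n)) := by
  rintro ⟨a, ha⟩
  have h := congrArg Fin.val ha
  simp [Fin.castAdd, Fin.natAdd] at h
  omega

private lemma cases_fin (x : Fin (q + n)) :
    (∃ a, x = Fin.castAdd n a) ∨ (∃ b, x = Fin.natAdd q b) := by
  rcases h : finSumFinEquiv.symm x with a | b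
  · left; exact ⟨a, by rw [← finSumFinEquiv_apply_left, ← h, Equiv.apply_symm_apply]⟩
  · right; exact ⟨b, by rw [← finSumFinEquiv_apply_right, ← h, Equiv.apply_symm_apply]⟩

private lemma castAdd_inj {a a' : Fin q} (h : Fin.castAdd n a = Fin.castAdd n a') : a = a' := by
  have := congrArg Fin.val h
  exact Fin.ext (by simpa using this)

private lemma natAdd_inj {b b' : Fin n} (h : Fin.natAdd q b = Fin.natAdd q b') : b = b' := by
  have := congrArg Fin.val h
  simp [Fin.natAdd] at this
  exact Fin.ext (by omega)

private lemma conj_self (A : Matrix (Fin q → Fin d) (Fin q → Fin d) ℂ)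
    (hsym : ∀ τ : Equiv.Perm (Fin q), (permMatrix d q τ)ᴴ * A * permMatrix d q τ = A)
    (ρ : Equiv.Perm (Fin (q + n)))
    (hρ : ⇑ρ ⁻¹' Set.range (Fin.castAdd n : Fin q → Fin (q + n)) =
          Set.range (Fin.castAdd n : Fin q → Fin (q + n))) :
    (permMatrix d (q+n) ρ)ᴴ * tensExt d q n A * permMatrix d (q+n) ρ = tensExt d q n A := by
  have hmemR : ∀ x : Fin (q+n),
      x ∈ Set.range (Fin.castAdd n : Fin q → Fin (q+n)) ↔
      ρ x ∈ Set.range (Fin.castAdd n : Fin q → Fin (q+n)) := by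
    intro x
    conv_lhs => rw [← hρ]
    exact Iff.rfl
  have hg : ∀ a : Fin q, ∃ a', ρ⁻¹ (Fin.castAdd n a) = Fin.castAdd n a' := by
    intro a
    have hx : ρ⁻¹ (Fin.castAdd n a) ∈ Set.range (Fin.castAdd n : Fin q → Fin (q+n)) := by
      rw [hmemR]; simp
    obtain ⟨a', ha'⟩ := hx
    exact ⟨a', ha'.symm⟩
  have hh : ∀ b : Fin n, ∃ b', ρ⁻¹ (Fin.natAdd q b) = Fin.natAdd q b' := by
    intro b
    rcases cases_fin (ρ⁻¹ (Fin.natAdd q b)) with ⟨a, ha⟩ | ⟨b', hb'⟩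
    · exfalso
      have hmem : ρ⁻¹ (Fin.natAdd q b) ∈ Set.range (Fin.castAdd n : Fin q → Fin (q+n)) :=
        ⟨a, ha.symm⟩
      rw [hmemR] at hmem
      simp only [Equiv.Perm.coe_inv, Equiv.apply_symm_apply] at hmem
      exact natAdd_not_mem_range b hmem
    · exact ⟨b', hb'⟩
  choose g hgs using hg
  choose h hhs using hh
  have hginj : Function.Injective g := by
    intro a a' hgg
    have h1 : ρ⁻¹ (Fin.castAdd n a) = ρ⁻¹ (Fin.castAdd n a') := by
      rw [hgs, hgs, hgg]
    exact castAdd_inj ((ρ⁻¹).injective h1)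
  have hhinj : Function.Injective h := by
    intro b b' hbb
    have h1 : ρ⁻¹ (Fin.natAdd q b) = ρ⁻¹ (Fin.natAdd q b') := by
      rw [hhs, hhs, hbb]
    exact natAdd_inj ((ρ⁻¹).injective h1)
  let αe : Equiv.Perm (Fin q) := Equiv.ofBijective g (Finite.injective_iff_bijective.mp hginj)
  let βe : Equiv.Perm (Fin n) := Equiv.ofBijective h (Finite.injective_iff_bijective.mp hhinj)
  ext i j
  rw [conj_apply]
  show tensExt d q n A (fun a => i (ρ⁻¹ a)) (fun a => j (ρ⁻¹ a)) = tensExt d q n A i j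
  unfold tensExt
  simp only []
  have hA : ∀ (u v : Fin q → Fin d), A (fun a => u (αe a)) (fun a => v (αe a)) = A u v := by
    intro u v
    have h2 := congrFun (congrFun (hsym αe⁻¹) u) v
    rw [conj_apply] at h2
    simpa using h2
  have hi : (fun a => i (ρ⁻¹ (Fin.castAdd n a))) = (fun a => i (Fin.castAdd n (g a))) :=
    funext fun a => by rw [hgs]
  have hj : (fun a => j (ρ⁻¹ (Fin.castAdd n a))) = (fun a => j (Fin.castAdd n (g a))) :=
    funext fun a => by rw [hgs]
  have hA' := hA (fun c => i (Fin.castAdd n c)) (fun c => j (Fin.castAdd n c))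
  simp only [αe, Equiv.ofBijective_apply] at hA'
  rw [hi, hj, hA']
  congr 1
  have hP := Equiv.prod_comp βe (fun c => if i (Fin.natAdd q c) = j (Fin.natAdd q c) then (1:ℂ) else 0)
  simp only [βe, Equiv.ofBijective_apply] at hP
  rw [← hP]
  exact Finset.prod_congr rfl fun b _ => by simp only [hhs]

private lemma part1 (A : Matrix (Fin q → Fin d) (Fin q → Fin d) ℂ)
    (hsym : ∀ τ : Equiv.Perm (Fin q), (permMatrix d q τ)ᴴ * A * permMatrix d q τ = A)
    (π σ : Equiv.Perm (Fin (q + n)))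
    (hπσ : ⇑π ⁻¹' Set.range (Fin.castAdd n : Fin q → Fin (q + n)) =
        ⇑σ ⁻¹' Set.range (Fin.castAdd n : Fin q → Fin (q + n))) :
    (permMatrix d (q + n) π)ᴴ * tensExt d q n A * permMatrix d (q + n) π =
      (permMatrix d (q + n) σ)ᴴ * tensExt d q n A * permMatrix d (q + n) σ := by
  have hρ : ⇑(π * σ⁻¹) ⁻¹' Set.range (Fin.castAdd n : Fin q → Fin (q + n)) =
      Set.range (Fin.castAdd n : Fin q → Fin (q + n)) := by
    ext x
    simp only [Set.mem_preimage, Equiv.Perm.coe_mul, Function.comp_apply]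
    have h1 : (σ⁻¹ x ∈ ⇑π ⁻¹' Set.range (Fin.castAdd n : Fin q → Fin (q + n))) ↔
        (σ⁻¹ x ∈ ⇑σ ⁻¹' Set.range (Fin.castAdd n : Fin q → Fin (q + n))) := by rw [hπσ]
    simpa [Set.mem_preimage] using h1
  have key := conj_self A hsym (π * σ⁻¹) hρ
  calc (permMatrix d (q + n) π)ᴴ * tensExt d q n A * permMatrix d (q + n) π
      = (permMatrix d (q + n) (π * σ⁻¹ * σ))ᴴ * tensExt d q n A *
          permMatrix d (q + n) (π * σ⁻¹ * σ) := by
        rw [inv_mul_cancel_right]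
    _ = (permMatrix d (q + n) σ)ᴴ *
          ((permMatrix d (q + n) (π * σ⁻¹))ᴴ * tensExt d q n A * permMatrix d (q + n) (π * σ⁻¹)) *
          permMatrix d (q + n) σ := (permConj_mul _ _ _).symm
    _ = (permMatrix d (q + n) σ)ᴴ * tensExt d q n A * permMatrix d (q + n) σ := by rw [key]

end Aux

section Aux2
variable {d q n : ℕ}

private def blockPerm (q n : ℕ) (α : Equiv.Perm (Fin q)) (β : Equiv.Perm (Fin n)) :
    Equiv.Perm (Fin (q + n)) :=
  (Equiv.permCongr finSumFinEquiv) (Equiv.sumCongr α β)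

private lemma blockPerm_castAdd (α : Equiv.Perm (Fin q)) (β : Equiv.Perm (Fin n)) (a : Fin q) :
    blockPerm q n α β (Fin.castAdd n a) = Fin.castAdd n (α a) := by
  simp [blockPerm, Equiv.permCongr_apply]

private lemma blockPerm_natAdd (α : Equiv.Perm (Fin q)) (β : Equiv.Perm (Fin n)) (b : Fin n) :
    blockPerm q n α β (Fin.natAdd q b) = Fin.natAdd q (β b) := by
  simp [blockPerm, Equiv.permCongr_apply]

private lemma blockPerm_pre (α : Equiv.Perm (Fin q)) (β : Equiv.Perm (Fin n)) :
    ⇑(blockPerm q n α β) ⁻¹' Set.range (Fin.castAdd n : Fin q → Fin (q + n)) =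
      Set.range (Fin.castAdd n : Fin q → Fin (q + n)) := by
  ext x
  simp only [Set.mem_preimage]
  rcases cases_fin x with ⟨a, rfl⟩ | ⟨b, rfl⟩
  · rw [blockPerm_castAdd]
    exact iff_of_true ⟨α a, rfl⟩ ⟨a, rfl⟩
  · rw [blockPerm_natAdd]
    exact iff_of_false (natAdd_not_mem_range _) (natAdd_not_mem_range _)

private lemma part2 (A : Matrix (Fin q → Fin d) (Fin q → Fin d) ℂ)
    (hsym : ∀ τ : Equiv.Perm (Fin q), (permMatrix d q τ)ᴴ * A * permMatrix d q τ = A)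
    (f : {S : Finset (Fin (q + n)) // S.card = q} → Equiv.Perm (Fin (q + n)))
    (hf : ∀ S, ⇑(f S) ⁻¹' Set.range (Fin.castAdd n : Fin q → Fin (q + n)) = ↑S.1) :
    symmetrize d (q + n) (tensExt d q n A) =
      (((q + n).choose q : ℂ))⁻¹ •
        ∑ S : {S : Finset (Fin (q + n)) // S.card = q},
          (permMatrix d (q + n) (f S))ᴴ * tensExt d q n A * permMatrix d (q + n) (f S) := by
  classical
  set R := Set.range (Fin.castAdd n : Fin q → Fin (q + n)) with hR
  let P := {S : Finset (Fin (q + n)) // S.card = q} × Equiv.Perm (Fin q) × Equiv.Perm (Fin n)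
  let Efun : P → Equiv.Perm (Fin (q + n)) := fun p => blockPerm q n p.2.1 p.2.2 * f p.1
  have hpre : ∀ p : P, ⇑(Efun p) ⁻¹' R = ↑p.1.1 := by
    intro p
    have : ⇑(Efun p) = ⇑(blockPerm q n p.2.1 p.2.2) ∘ ⇑(f p.1) := rfl
    rw [this, Set.preimage_comp, blockPerm_pre, hf]
  have hinj : Function.Injective Efun := by
    rintro ⟨S, α, β⟩ ⟨S', α', β'⟩ hEq
    have hSS : (↑S.1 : Set (Fin (q+n))) = ↑S'.1 := by
      rw [← hpre ⟨S, α, β⟩, ← hpre ⟨S', α', β'⟩, hEq]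
    have hS : S = S' := Subtype.ext (Finset.coe_injective hSS)
    subst hS
    have hm : blockPerm q n α β = blockPerm q n α' β' := by
      have := mul_right_cancel (hEq : blockPerm q n α β * f S = blockPerm q n α' β' * f S)
      exact this
    have hα : α = α' := Equiv.ext fun a => by
      have := congrArg (fun e => e (Fin.castAdd n a)) hm
      simp only [blockPerm_castAdd] at this
      exact castAdd_inj this
    have hβ : β = β' := Equiv.ext fun b => by
      have := congrArg (fun e => e (Fin.natAdd q b)) hm
      simp only [blockPerm_natAdd] at this
      exact natAdd_inj this
    rw [hα, hβ]
  have hcard : Fintype.card P = Fintype.card (Equiv.Perm (Fin (q + n))) := by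
    simp only [P, Fintype.card_prod, Fintype.card_perm, Fintype.card_fin,
      Fintype.card_finset_len, Fintype.card_fin]
    rw [← Nat.choose_mul_factorial_mul_factorial (Nat.le_add_right q n),
      Nat.add_sub_cancel_left ]
    ring
  have hbij : Function.Bijective Efun :=
    (Fintype.bijective_iff_injective_and_card Efun).mpr ⟨hinj, hcard⟩
  let E : P ≃ Equiv.Perm (Fin (q + n)) := Equiv.ofBijective Efun hbij
  have hsum : ∑ π : Equiv.Perm (Fin (q + n)),
      (permMatrix d (q + n) π)ᴴ * tensExt d q n A * permMatrix d (q + n) π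
      = ∑ p : P, (permMatrix d (q + n) (Efun p))ᴴ * tensExt d q n A *
          permMatrix d (q + n) (Efun p) := by
    rw [← Equiv.sum_comp E (fun π => (permMatrix d (q + n) π)ᴴ * tensExt d q n A *
      permMatrix d (q + n) π)]
    rfl
  have hconst : ∀ p : P, (permMatrix d (q + n) (Efun p))ᴴ * tensExt d q n A *
      permMatrix d (q + n) (Efun p)
      = (permMatrix d (q + n) (f p.1))ᴴ * tensExt d q n A * permMatrix d (q + n) (f p.1) :=
    fun p => part1 A hsym _ _ (by rw [hpre p, hf p.1])
  rw [symmetrize, hsum]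
  rw [Finset.sum_congr rfl (fun p _ => hconst p)]
  rw [Fintype.sum_prod_type]
  have hconstsum : ∀ S : {S : Finset (Fin (q + n)) // S.card = q},
      (∑ _x : Equiv.Perm (Fin q) × Equiv.Perm (Fin n),
        (permMatrix d (q + n) (f S))ᴴ * tensExt d q n A * permMatrix d (q + n) (f S))
      = (Nat.factorial q * Nat.factorial n) •
          ((permMatrix d (q + n) (f S))ᴴ * tensExt d q n A * permMatrix d (q + n) (f S)) := by
    intro S
    rw [Finset.sum_const, Finset.card_univ, Fintype.card_prod, Fintype.card_perm,
      Fintype.card_perm, Fintype.card_fin, Fintype.card_fin]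
  rw [Finset.sum_congr rfl (fun S _ => hconstsum S), ← Finset.smul_sum]
  rw [← Nat.cast_smul_eq_nsmul ℂ, smul_smul]
  congr 1
  have hne1 : ((q + n).factorial : ℂ) ≠ 0 := Nat.cast_ne_zero.mpr (Nat.factorial_ne_zero _)
  have hne2 : (((q + n).choose q : ℕ) : ℂ) ≠ 0 :=
    Nat.cast_ne_zero.mpr (Nat.choose_pos (Nat.le_add_right q n)).ne'
  have hkey : (((q + n).choose q : ℕ) : ℂ) * ((Nat.factorial q * Nat.factorial n : ℕ) : ℂ)
      = ((q + n).factorial : ℂ) := by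
    rw [← Nat.cast_mul]
    congr 1
    rw [← Nat.choose_mul_factorial_mul_factorial (Nat.le_add_right q n),
      Nat.add_sub_cancel_left]
    ring
  field_simp
  push_cast at hkey ⊢
  linear_combination hkey

end Aux2

/-- For symmetric `A` on `ℋ^{⊗q}`: if `π, σ ∈ S_{q+n}` have the same
preimage of `{1,…,q}`, then they give the same conjugate of `A ⊗ I^{⊗n}`; consequently
`𝖯_{q+n}(A ⊗ I^{⊗n})` is the average of only `binom(q+n,q)` distinct conjugates, one for
each `q`-element subset of `{1,…,q+n}`. -/
theorem stmt13 (d q n : ℕ) (hd : 1 ≤ d) (hq : 1 ≤ q)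
    (A : Matrix (Fin q → Fin d) (Fin q → Fin d) ℂ)
    (hsym : ∀ τ : Equiv.Perm (Fin q), (permMatrix d q τ)ᴴ * A * permMatrix d q τ = A) :
    (∀ π σ : Equiv.Perm (Fin (q + n)),
      ⇑π ⁻¹' Set.range (Fin.castAdd n : Fin q → Fin (q + n)) =
        ⇑σ ⁻¹' Set.range (Fin.castAdd n : Fin q → Fin (q + n)) →
      (permMatrix d (q + n) π)ᴴ * tensExt d q n A * permMatrix d (q + n) π =
        (permMatrix d (q + n) σ)ᴴ * tensExt d q n A * permMatrix d (q + n) σ) ∧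
    (∀ f : {S : Finset (Fin (q + n)) // S.card = q} → Equiv.Perm (Fin (q + n)),
      (∀ S, ⇑(f S) ⁻¹' Set.range (Fin.castAdd n : Fin q → Fin (q + n)) = ↑S.1) →
      symmetrize d (q + n) (tensExt d q n A) =
        (((q + n).choose q : ℂ))⁻¹ •
          ∑ S : {S : Finset (Fin (q + n)) // S.card = q},
            (permMatrix d (q + n) (f S))ᴴ * tensExt d q n A * permMatrix d (q + n) (f S)) := by
  exact ⟨fun π σ h => part1 A hsym π σ h, fun f hf => part2 A hsym f hf⟩
end
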